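/- arXiv:1806.02010 — 2 statements merged into one kernel-verified Lean document; each statement's English description precedes it below -/
import Mathlib

section
/- Let q₀, q₁ be two nonzero homogeneous quadratic polynomials in three variables over ℂ with no common (non-constant) polynomial factor. Then their common zero locus in ℙ² consists of at most 4 points. -/
open MvPolynomial

noncomputable section
namespace ConicsAux

open Matrix

abbrev R3 := MvPolynomial (Fin 3) ℂ
abbrev V3 := Fin 3 → ℂ

lemma fin3_prod {M : Type*} [CommMonoid M] (z : Fin 3 → M) (d : Fin 3 →₀ ℕ) :
    (d.prod fun i k => z i ^ k) = z 0 ^ d 0 * z 1 ^ d 1 * z 2 ^ d 2 := by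
  rw [Finsupp.prod_fintype _ _ (fun i => pow_zero (z i)), Fin.prod_univ_three]

lemma degree_three (d : Fin 3 →₀ ℕ) : d.degree = d 0 + d 1 + d 2 := by
  rw [Finsupp.degree_apply, Finset.sum_subset (Finset.subset_univ _)
    (fun i _ hi => Finsupp.notMem_support_iff.mp hi), Fin.sum_univ_three]

lemma homog_support_eq {n : ℕ} {q : R3} (hq : q.IsHomogeneous n) {d : Fin 3 →₀ ℕ}
    (hd : coeff d q ≠ 0) : d 0 + d 1 + d 2 = n := by
  have h := hq hd
  rw [← DFunLike.congr_fun (show Finsupp.degree = Finsupp.weight (1 : Fin 3 → ℕ) from Finsupp.degree_eq_weight_one) d, degree_three] at h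
  exact h


set_option maxHeartbeats 1000000 in
lemma quad_expand {q : R3} (hq : q.IsHomogeneous 2) (u w : V3) (x y : ℂ) :
    eval (x • u + y • w) q = x ^ 2 * eval u q
      + x * y * (eval (u + w) q - eval u q - eval w q) + y ^ 2 * eval w q := by
  have H : ∀ s : Finset (Fin 3 →₀ ℕ), (∀ d ∈ s, d 0 + d 1 + d 2 = 2) →
      ∀ f : (Fin 3 →₀ ℕ) → ℂ,
      (eval (x • u + y • w) (∑ d ∈ s, monomial d (f d)) =
        x ^ 2 * eval u (∑ d ∈ s, monomial d (f d))
        + x * y * (eval (u + w) (∑ d ∈ s, monomial d (f d))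
            - eval u (∑ d ∈ s, monomial d (f d)) - eval w (∑ d ∈ s, monomial d (f d)))
        + y ^ 2 * eval w (∑ d ∈ s, monomial d (f d))) := by
    intro s
    induction s using Finset.induction_on with
    | empty => simp
    | @insert a s ha ih =>
      intro hs f
      have hmon : ∀ v : V3, eval v (monomial a (f a)) =
          f a * (v 0 ^ a 0 * v 1 ^ a 1 * v 2 ^ a 2) := by
        intro v; rw [eval_monomial, fin3_prod]
      have key : eval (x • u + y • w) (monomial a (f a)) =
          x ^ 2 * eval u (monomial a (f a))
          + x * y * (eval (u + w) (monomial a (f a)) - eval u (monomial a (f a))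
              - eval w (monomial a (f a))) + y ^ 2 * eval w (monomial a (f a)) := by
        simp only [hmon, Pi.add_apply, Pi.smul_apply, smul_eq_mul]
        have h2 : a 0 + a 1 + a 2 = 2 := hs a (Finset.mem_insert_self a s)
        generalize hp0 : a 0 = p0 at h2 ⊢
        generalize hp1 : a 1 = p1 at h2 ⊢
        generalize hp2 : a 2 = p2 at h2 ⊢
        have b0 : p0 ≤ 2 := by omega
        interval_cases p0 <;>
          (have b1 : p1 ≤ 2 := by omega
           interval_cases p1 <;>
             (have b2 : p2 ≤ 2 := by omega
              interval_cases p2 <;> first | omega | ring))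
      rw [Finset.sum_insert ha]
      simp only [map_add]
      rw [ih (fun d hd => hs d (Finset.mem_insert_of_mem hd)) f, key]
      ring
  have := H q.support (fun d hd => homog_support_eq hq (mem_support_iff.mp hd)) (fun d => coeff d q)
  rwa [support_sum_monomial_coeff] at this


lemma lin_expand {m : R3} (hm : m.IsHomogeneous 1) (u w : V3) (x y : ℂ) :
    eval (x • u + y • w) m = x * eval u m + y * eval w m := by
  have H : ∀ s : Finset (Fin 3 →₀ ℕ), (∀ d ∈ s, d 0 + d 1 + d 2 = 1) →
      ∀ f : (Fin 3 →₀ ℕ) → ℂ,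
      (eval (x • u + y • w) (∑ d ∈ s, monomial d (f d)) =
        x * eval u (∑ d ∈ s, monomial d (f d)) + y * eval w (∑ d ∈ s, monomial d (f d))) := by
    intro s
    induction s using Finset.induction_on with
    | empty => simp
    | @insert a s ha ih =>
      intro hs f
      have hmon : ∀ v : V3, eval v (monomial a (f a)) =
          f a * (v 0 ^ a 0 * v 1 ^ a 1 * v 2 ^ a 2) := by
        intro v; rw [eval_monomial, fin3_prod]
      have key : eval (x • u + y • w) (monomial a (f a)) =
          x * eval u (monomial a (f a)) + y * eval w (monomial a (f a)) := by
        simp only [hmon, Pi.add_apply, Pi.smul_apply, smul_eq_mul]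
        have h2 : a 0 + a 1 + a 2 = 1 := hs a (Finset.mem_insert_self a s)
        generalize hp0 : a 0 = p0 at h2 ⊢
        generalize hp1 : a 1 = p1 at h2 ⊢
        generalize hp2 : a 2 = p2 at h2 ⊢
        have b0 : p0 ≤ 1 := by omega
        interval_cases p0 <;>
          (have b1 : p1 ≤ 1 := by omega
           interval_cases p1 <;>
             (have b2 : p2 ≤ 1 := by omega
              interval_cases p2 <;> first | omega | ring))
      rw [Finset.sum_insert ha]
      simp only [map_add]
      rw [ih (fun d hd => hs d (Finset.mem_insert_of_mem hd)) f, key]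
      ring
  have := H m.support (fun d hd => homog_support_eq hm (mem_support_iff.mp hd))
    (fun d => coeff d m)
  rwa [support_sum_monomial_coeff] at this


lemma eval_aeval' (v : V3) (g : Fin 3 → R3) (p : R3) :
    eval v (aeval g p) = eval (fun i => eval v (g i)) p := by
  rw [aeval_def, eval₂_comp_left (eval v)]
  have h : (eval v).comp (algebraMap ℂ R3) = RingHom.id ℂ := by
    ext r
    simp
  rw [h, eval₂_id]
  rfl

def lsub (M : Matrix (Fin 3) (Fin 3) ℂ) : R3 →ₐ[ℂ] R3 :=
  aeval (fun i => ∑ j, C (M i j) * X j)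

lemma eval_lsub (M : Matrix (Fin 3) (Fin 3) ℂ) (v : V3) (p : R3) :
    eval v (lsub M p) = eval (M.mulVec v) p := by
  rw [lsub, eval_aeval']
  have h : (fun i => eval v (∑ j, C (M i j) * X j)) = M.mulVec v := by
    funext i
    simp [Matrix.mulVec, dotProduct]
  rw [h]

lemma lsub_lsub (M N : Matrix (Fin 3) (Fin 3) ℂ) (p : R3) :
    lsub M (lsub N p) = lsub (N * M) p := by
  have h : (lsub M).comp (lsub N) = lsub (N * M) := by
    apply MvPolynomial.algHom_ext
    intro i
    simp only [AlgHom.comp_apply, lsub, aeval_X, map_sum, _root_.map_mul, aeval_C,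
      Finset.mul_sum, Matrix.mul_apply, map_sum]
    rw [Finset.sum_comm]
    refine Finset.sum_congr rfl fun k _ => ?_
    rw [Finset.sum_mul]
    refine Finset.sum_congr rfl fun j _ => ?_
    simp [algebraMap_eq, mul_assoc]
  exact congrFun (congrArg DFunLike.coe h) p

lemma lsub_one (p : R3) : lsub 1 p = p := by
  have h : lsub 1 = AlgHom.id ℂ R3 := by
    apply MvPolynomial.algHom_ext
    intro i
    simp [lsub, Matrix.one_apply, apply_ite C, ite_mul]
  rw [h]; rfl


lemma X0_dvd {p : R3} (h : ∀ v : V3, v 0 = 0 → eval v p = 0) : (X 0 : R3) ∣ p := by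
  classical
  set g : Fin 3 → R3 := fun i => if i = 0 then 0 else X i with hg
  have h0 : aeval g p = 0 := by
    apply MvPolynomial.funext (q := 0)
    intro v
    rw [eval_aeval', map_zero]
    apply h
    simp [hg]
  have key : (X 0 : R3) ∣ p - aeval g p := by
    conv in p - aeval g p => rw [← support_sum_monomial_coeff p]
    rw [map_sum, ← Finset.sum_sub_distrib]
    apply Finset.dvd_sum
    intro d _
    by_cases hd0 : d 0 = 0
    · have he : aeval g (monomial d (coeff d p)) = monomial d (coeff d p) := by
        rw [aeval_monomial, fin3_prod, monomial_eq, fin3_prod]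
        simp [hg, hd0, algebraMap_eq]
      rw [he, sub_self]
      exact dvd_zero _
    · have he : aeval g (monomial d (coeff d p)) = 0 := by
        rw [aeval_monomial, fin3_prod]
        simp [hg, zero_pow hd0]
      rw [he, sub_zero, monomial_eq, fin3_prod]
      obtain ⟨k, hk⟩ := Nat.exists_eq_succ_of_ne_zero hd0
      exact ⟨C (coeff d p) * (X 0 ^ k * X 1 ^ d 1 * X 2 ^ d 2), by rw [hk, pow_succ]; ring⟩
  have := sub_add_cancel p (aeval g p)
  calc (X 0 : R3) ∣ p - aeval g p := key
  _ = p := by rw [h0, sub_zero]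


lemma lsub_isHomogeneous {n : ℕ} {p : R3} (hp : p.IsHomogeneous n)
    (M : Matrix (Fin 3) (Fin 3) ℂ) : (lsub M p).IsHomogeneous n := by
  have := hp.aeval (fun i => ∑ j, C (M i j) * X j)
    (fun i => IsHomogeneous.sum _ _ 1 (fun j _ => isHomogeneous_C_mul_X (M i j) j))
  rw [one_mul] at this
  exact this

lemma line_factor (c a b : V3) (h : LinearIndependent ℂ ![c, a, b]) :
    ∃ ℓ : R3, ℓ.IsHomogeneous 1 ∧
      (∀ v : V3, eval v ℓ = 0 → ∃ x y : ℂ, v = x • a + y • b) ∧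
      ∀ q : R3, (∀ x y : ℂ, eval (x • a + y • b) q = 0) →
        ∃ m : R3, q = ℓ * m ∧ (q.IsHomogeneous 2 → m.IsHomogeneous 1) := by
  set M : Matrix (Fin 3) (Fin 3) ℂ := (Matrix.of ![c, a, b])ᵀ with hMdef
  have hM : IsUnit M := by
    apply Matrix.linearIndependent_cols_iff_isUnit.mp
    exact h
  have hdet : IsUnit M.det := (Matrix.isUnit_iff_isUnit_det M).mp hM
  have hMM : M * M⁻¹ = 1 := Matrix.mul_nonsing_inv M hdet
  have hmul : ∀ v : V3, M.mulVec v = v 0 • c + v 1 • a + v 2 • b := by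
    intro v
    funext i
    simp only [hMdef, Matrix.mulVec, dotProduct, Fin.sum_univ_three, Pi.add_apply,
      Pi.smul_apply, smul_eq_mul, Matrix.transpose_apply, Matrix.of_apply]
    fin_cases i <;> simp [Matrix.vecHead, Matrix.vecTail] <;> ring
  refine ⟨lsub M⁻¹ (X 0), ?_, ?_, ?_⟩
  · have he : lsub M⁻¹ (X 0) = ∑ j, C (M⁻¹ 0 j) * X j := by rw [lsub, aeval_X]
    rw [he]
    exact IsHomogeneous.sum _ _ 1 (fun j _ => isHomogeneous_C_mul_X _ j)
  · intro v hv
    rw [eval_lsub, eval_X] at hv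
    have hv' : v = M.mulVec (M⁻¹.mulVec v) := by
      rw [Matrix.mulVec_mulVec, hMM, Matrix.one_mulVec]
    refine ⟨(M⁻¹.mulVec v) 1, (M⁻¹.mulVec v) 2, ?_⟩
    conv_lhs => rw [hv', hmul]
    rw [hv, zero_smul, zero_add]
  · intro q hq
    have hq' : ∀ v : V3, v 0 = 0 → eval v (lsub M q) = 0 := by
      intro v h0
      rw [eval_lsub, hmul, h0, zero_smul, zero_add]
      exact hq _ _
    obtain ⟨m0, hm0⟩ := X0_dvd hq'
    refine ⟨lsub M⁻¹ m0, ?_, ?_⟩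
    · have hback : lsub M⁻¹ (lsub M q) = q := by rw [lsub_lsub, hMM, lsub_one]
      rw [← hback, hm0, _root_.map_mul]
    · intro hq2
      have h2' : (lsub M q).IsHomogeneous 2 := lsub_isHomogeneous hq2 M
      have hm1 : m0.IsHomogeneous 1 := by
        intro d hd
        have hc : coeff (Finsupp.single 0 1 + d) (lsub M q) ≠ 0 := by
          rw [hm0, coeff_X_mul]
          exact hd
        have hs := homog_support_eq h2' hc
        rw [← DFunLike.congr_fun (show Finsupp.degree = Finsupp.weight (1 : Fin 3 → ℕ) from Finsupp.degree_eq_weight_one) d, degree_three]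
        simp only [Finsupp.add_apply, Finsupp.single_apply] at hs
        simp at hs
        omega
      exact lsub_isHomogeneous hm1 M⁻¹


lemma nonunit_of_homog {p : R3} {n : ℕ} (hn : n ≠ 0) (hp : p.IsHomogeneous n) :
    ¬ IsUnit p := by
  intro hu
  have h0 : eval (0 : V3) p = 0 := by
    rw [eval_zero]
    exact hp.coeff_eq_zero (by simpa using (Ne.symm hn))
  have := hu.map (eval (0 : V3))
  rw [h0] at this
  simpa using this

lemma vanish_on_span {q : R3} (hq : q.IsHomogeneous 2) {u w : V3}
    (hu : eval u q = 0) (hw : eval w q = 0) {s t : ℂ} (hs : s ≠ 0) (ht : t ≠ 0)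
    (hst : eval (s • u + t • w) q = 0) : ∀ x y : ℂ, eval (x • u + y • w) q = 0 := by
  have hB : eval (u + w) q - eval u q - eval w q = 0 := by
    have h := quad_expand hq u w s t
    rw [hst] at h
    have h' : s * t * (eval (u + w) q - eval u q - eval w q) = 0 := by
      linear_combination -h - s ^ 2 * hu - t ^ 2 * hw
    rcases mul_eq_zero.mp h' with h'' | h''
    · exact absurd h'' (by simp [hs, ht])
    · exact h''
  intro x y
  rw [quad_expand hq u w x y, hB, hu, hw]
  ring

/-- If both conics vanish on a whole line (span of two independent vectors), they have a
common nonunit factor: contradiction with coprimality. -/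
lemma contra_line {q₀ q₁ : R3}
    (hcop : ∀ d : R3, d ∣ q₀ → d ∣ q₁ → IsUnit d)
    {a b : V3} (hab : LinearIndependent ℂ ![a, b])
    (h0 : ∀ x y : ℂ, eval (x • a + y • b) q₀ = 0)
    (h1 : ∀ x y : ℂ, eval (x • a + y • b) q₁ = 0) : False := by
  have hfr : (2 : ℕ) < Module.finrank ℂ V3 := by
    rw [Module.finrank_fin_fun]
    omega
  obtain ⟨c, hc⟩ := exists_linearIndependent_cons_of_lt_finrank hab hfr
  have hc' : LinearIndependent ℂ ![c, a, b] := hc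
  obtain ⟨ℓ, hℓ1, -, hdiv⟩ := line_factor c a b hc'
  obtain ⟨m₀, hm₀, -⟩ := hdiv q₀ h0
  obtain ⟨m₁, hm₁, -⟩ := hdiv q₁ h1
  exact nonunit_of_homog one_ne_zero hℓ1 (hcop ℓ ⟨m₀, hm₀⟩ ⟨m₁, hm₁⟩)

/-- A degree-1 homogeneous polynomial vanishing on three linearly independent vectors is zero. -/
lemma linear_vanish {m : R3} (hm : m.IsHomogeneous 1) {u v w : V3}
    (h : LinearIndependent ℂ ![u, v, w])
    (hu : eval u m = 0) (hv : eval v m = 0) (hw : eval w m = 0) : m = 0 := by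
  have hcard : Fintype.card (Fin 3) = Module.finrank ℂ V3 := by
    rw [Module.finrank_fin_fun]
    simp
  let B : Module.Basis (Fin 3) ℂ V3 := basisOfLinearIndependentOfCardEqFinrank h hcard
  have hB : ∀ i, B i = ![u, v, w] i := fun i => by
    rw [coe_basisOfLinearIndependentOfCardEqFinrank]
  apply MvPolynomial.funext (q := 0)
  intro x
  rw [map_zero]
  have hx : x = B.repr x 0 • u + (1 : ℂ) • (B.repr x 1 • v + B.repr x 2 • w) := by
    conv_lhs => rw [← B.sum_repr x]
    rw [Fin.sum_univ_three, hB 0, hB 1, hB 2]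
    simp only [Matrix.cons_val_zero, Matrix.cons_val_one, Matrix.head_cons, one_smul,
      Matrix.cons_val_two, Matrix.tail_cons]
    rw [add_assoc]
  rw [hx, lin_expand hm, lin_expand hm, hu, hv, hw]
  ring

lemma range_pair (a b : V3) : Set.range ![a, b] = {a, b} := by
  simp [Matrix.range_cons, Matrix.range_empty, Set.pair_comm]

lemma key {q₀ q₁ : R3} (h₀ : q₀.IsHomogeneous 2) (h₁ : q₁.IsHomogeneous 2)
    (hq₀ : q₀ ≠ 0) (hq₁ : q₁ ≠ 0)
    (hcop : ∀ d : R3, d ∣ q₀ → d ∣ q₁ → IsUnit d)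
    (v : Fin 5 → V3)
    (hz₀ : ∀ i, eval (v i) q₀ = 0) (hz₁ : ∀ i, eval (v i) q₁ = 0)
    (hpair : ∀ i j, i ≠ j → LinearIndependent ℂ ![v i, v j]) : False := by
  by_cases hgen : ∀ i j k : Fin 5, i ≠ j → i ≠ k → j ≠ k →
      LinearIndependent ℂ ![v i, v j, v k]
  · -- general position: use the pencil argument
    set w' : V3 := v 0 + v 1 with hw'
    set e₀ : ℂ := eval w' q₀ with he₀def
    set e₁ : ℂ := eval w' q₁ with he₁def
    set r : R3 := C e₁ * q₀ - C e₀ * q₁ with hrdef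
    have hrhom : r.IsHomogeneous 2 := (h₀.C_mul e₁).sub (h₁.C_mul e₀)
    have hre : ∀ u : V3, eval u r = e₁ * eval u q₀ - e₀ * eval u q₁ := by
      intro u
      simp [hrdef]
    have hrv : ∀ i, eval (v i) r = 0 := fun i => by rw [hre, hz₀ i, hz₁ i]; ring
    have hrw : eval w' r = 0 := by rw [hre, ← he₀def, ← he₁def]; ring
    by_cases hr0 : r = 0
    · have heq : C e₁ * q₀ = C e₀ * q₁ := by rwa [hrdef, sub_eq_zero] at hr0
      by_cases he₀ : e₀ = 0
      · by_cases he₁ : e₁ = 0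
        · have hv01 : ∀ q : R3, q.IsHomogeneous 2 → eval (v 0) q = 0 → eval (v 1) q = 0 →
              eval w' q = 0 → ∀ x y : ℂ, eval (x • v 0 + y • v 1) q = 0 := by
            intro q hq hq0 hq1 hqw
            exact vanish_on_span hq hq0 hq1 one_ne_zero one_ne_zero
              (by simpa [hw'] using hqw)
          exact contra_line hcop (hpair 0 1 (by decide))
            (hv01 q₀ h₀ (hz₀ 0) (hz₀ 1) he₀) (hv01 q₁ h₁ (hz₁ 0) (hz₁ 1) he₁)
        · apply hq₀
          have hz : C e₁ * q₀ = 0 := by rw [heq, he₀, map_zero, zero_mul]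
          rcases mul_eq_zero.mp hz with h | h
          · exact absurd (by rwa [MvPolynomial.C_eq_zero] at h) he₁
          · exact h
      · have h2 : q₁ = C (e₀⁻¹ * e₁) * q₀ := by
          have hc := congrArg (fun p => C (e₀⁻¹) * p) heq
          simp only [← mul_assoc, ← _root_.map_mul] at hc
          rw [inv_mul_cancel₀ he₀, MvPolynomial.C_1, one_mul] at hc
          exact hc.symm
        have := hcop q₀ dvd_rfl ⟨C (e₀⁻¹ * e₁), by rw [h2]; ring⟩
        exact nonunit_of_homog two_ne_zero h₀ this
    · have hv01 : eval ((1 : ℂ) • v 0 + (1 : ℂ) • v 1) r = 0 := by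
        simpa [hw'] using hrw
      have hlr : ∀ x y : ℂ, eval (x • v 0 + y • v 1) r = 0 :=
        vanish_on_span hrhom (hrv 0) (hrv 1) one_ne_zero one_ne_zero hv01
      have h201 : LinearIndependent ℂ ![v 2, v 0, v 1] :=
        hgen 2 0 1 (by decide) (by decide) (by decide)
      obtain ⟨ℓ, hℓ1, hℓmem, hdiv⟩ := line_factor (v 2) (v 0) (v 1) h201
      obtain ⟨m, hm, hmh⟩ := hdiv r hlr
      have hm1 : m.IsHomogeneous 1 := hmh hrhom
      have hmz : ∀ i : Fin 5, LinearIndependent ℂ ![v i, v 0, v 1] → eval (v i) m = 0 := by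
        intro i hLI
        have hri := hrv i
        rw [hm, _root_.map_mul] at hri
        rcases mul_eq_zero.mp hri with h | h
        · exfalso
          obtain ⟨x, y, hxy⟩ := hℓmem (v i) h
          have hmem : v i ∈ Submodule.span ℂ (Set.range ![v 0, v 1]) := by
            rw [range_pair, Submodule.mem_span_pair]
            exact ⟨x, y, hxy.symm⟩
          exact (linearIndependent_fin_cons.mp hLI).2 hmem
        · exact h
      have hm0 : m = 0 := by
        refine linear_vanish hm1 (hgen 2 3 4 (by decide) (by decide) (by decide)) ?_ ?_ ?_
        · exact hmz 2 h201
        · exact hmz 3 (hgen 3 0 1 (by decide) (by decide) (by decide))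
        · exact hmz 4 (hgen 4 0 1 (by decide) (by decide) (by decide))
      exact hr0 (by rw [hm, hm0, mul_zero])
  · -- three of the points are collinear
    push_neg at hgen
    obtain ⟨i, j, k, hij, hik, hjk, hdep⟩ := hgen
    have htail : LinearIndependent ℂ ![v j, v k] := hpair j k hjk
    have hmem : v i ∈ Submodule.span ℂ (Set.range ![v j, v k]) := by
      by_contra hmem
      exact hdep (linearIndependent_fin_cons.mpr ⟨htail, hmem⟩)
    rw [range_pair, Submodule.mem_span_pair] at hmem
    obtain ⟨s, t, hst⟩ := hmem
    have hs : s ≠ 0 := by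
      rintro rfl
      have hz : (1 : ℂ) • v i + (-t) • v k = 0 := by
        rw [← hst]
        module
      have := (LinearIndependent.pair_iff.mp (hpair i k hik) 1 (-t) hz).1
      exact one_ne_zero this
    have ht : t ≠ 0 := by
      rintro rfl
      have hz : (1 : ℂ) • v i + (-s) • v j = 0 := by
        rw [← hst]
        module
      have := (LinearIndependent.pair_iff.mp (hpair i j hij) 1 (-s) hz).1
      exact one_ne_zero this
    have l₀ : ∀ x y : ℂ, eval (x • v j + y • v k) q₀ = 0 :=
      vanish_on_span h₀ (hz₀ j) (hz₀ k) hs ht (by rw [hst]; exact hz₀ i)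
    have l₁ : ∀ x y : ℂ, eval (x • v j + y • v k) q₁ = 0 :=
      vanish_on_span h₁ (hz₁ j) (hz₁ k) hs ht (by rw [hst]; exact hz₁ i)
    exact contra_line hcop htail l₀ l₁



end ConicsAux
end

open ConicsAux in

/-- Two nonzero homogeneous quadratic polynomials in three variables over ℂ with no
common non-constant factor have at most 4 common zeros in ℙ². -/
theorem conics_common_zeros_le_four
    (q₀ q₁ : MvPolynomial (Fin 3) ℂ)
    (h₀ : q₀.IsHomogeneous 2) (h₁ : q₁.IsHomogeneous 2)
    (hq₀ : q₀ ≠ 0) (hq₁ : q₁ ≠ 0)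
    (hcop : ∀ d : MvPolynomial (Fin 3) ℂ, d ∣ q₀ → d ∣ q₁ → IsUnit d) :
    Set.Finite {x : Projectivization ℂ (Fin 3 → ℂ) |
        eval x.rep q₀ = 0 ∧ eval x.rep q₁ = 0} ∧
    Set.ncard {x : Projectivization ℂ (Fin 3 → ℂ) |
        eval x.rep q₀ = 0 ∧ eval x.rep q₁ = 0} ≤ 4 := by
  set S := {x : Projectivization ℂ (Fin 3 → ℂ) | eval x.rep q₀ = 0 ∧ eval x.rep q₁ = 0}
    with hSdef
  have key5 : ∀ t : Set (Projectivization ℂ (Fin 3 → ℂ)),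
      t ⊆ S → t.Finite → t.ncard = 5 → False := by
    intro t hts htf hcard
    have hc : htf.toFinset.card = 5 := by
      rw [← Set.ncard_eq_toFinset_card t htf]
      exact hcard
    let e := Finset.equivFinOfCardEq hc
    set p : Fin 5 → Projectivization ℂ (Fin 3 → ℂ) := fun i => ((e.symm i : htf.toFinset) : _)
      with hpdef
    have hpS : ∀ i, p i ∈ S := fun i => hts (htf.mem_toFinset.mp (e.symm i).2)
    have hpinj : Function.Injective p := by
      intro i j hij
      exact e.symm.injective (Subtype.ext hij)
    set v : Fin 5 → V3 := fun i => (p i).rep with hvdef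
    refine key h₀ h₁ hq₀ hq₁ hcop v (fun i => (hpS i).1) (fun i => (hpS i).2) ?_
    intro i j hij
    have hne : p i ≠ p j := fun h => hij (hpinj h)
    have hind := (Projectivization.independent_pair_iff_ne (p i) (p j)).mpr hne
    rw [Projectivization.independent_iff] at hind
    have hcomp : ![v i, v j] = Projectivization.rep ∘ ![p i, p j] := by
      funext k
      fin_cases k <;> rfl
    rw [hcomp]
    exact hind
  have hFin : S.Finite := by
    by_contra hinf
    rw [← Set.not_infinite, not_not] at hinf
    obtain ⟨t, hts, htf, hcard⟩ := Set.Infinite.exists_subset_ncard_eq hinf 5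
    exact key5 t hts htf hcard
  refine ⟨hFin, ?_⟩
  by_contra hlt
  push_neg at hlt
  obtain ⟨t, hts, hcard⟩ := Set.exists_subset_card_eq (show 5 ≤ S.ncard by omega)
  exact key5 t hts (hFin.subset hts) hcard
end

section
/- Let q₀, q₁, q₂ be homogeneous quadratic polynomials in four variables over ℂ whose common zero locus in ℙ³ consists of exactly 8 distinct points. Then these 8 points do not all lie on a hyperplane of ℙ³. -/
open MvPolynomial

/-- A monomial of total degree 2 in three variables, expressed in the 6-dim basis. -/
private lemma monom_two (a b c : ℕ) (h : a + b + c = 2) (x y z : ℂ) :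
    x ^ a * y ^ b * z ^ c =
      (if a = 2 then (1:ℂ) else 0) * x ^ 2 + (if b = 2 then (1:ℂ) else 0) * y ^ 2 +
      (if c = 2 then (1:ℂ) else 0) * z ^ 2 + (if a = 1 ∧ b = 1 then (1:ℂ) else 0) * (x * y) +
      (if a = 1 ∧ c = 1 then (1:ℂ) else 0) * (x * z) +
      (if b = 1 ∧ c = 1 then (1:ℂ) else 0) * (y * z) := by
  have h6 : (a=2∧b=0∧c=0)∨(a=0∧b=2∧c=0)∨(a=0∧b=0∧c=2)∨(a=1∧b=1∧c=0)∨
      (a=1∧b=0∧c=1)∨(a=0∧b=1∧c=1) := by omega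
  rcases h6 with ⟨h1,h2,h3⟩|⟨h1,h2,h3⟩|⟨h1,h2,h3⟩|⟨h1,h2,h3⟩|⟨h1,h2,h3⟩|⟨h1,h2,h3⟩ <;>
    subst h1 <;> subst h2 <;> subst h3 <;> norm_num <;> ring

/-- Every homogeneous quadratic in three variables evaluates as a quadratic form. -/
private lemma quad_eval_form (g : MvPolynomial (Fin 3) ℂ) (hg : g.IsHomogeneous 2) :
    ∃ A B Cc D E F : ℂ, ∀ x y z : ℂ,
      eval ![x, y, z] g =
        A * x ^ 2 + B * y ^ 2 + Cc * z ^ 2 + D * (x * y) + E * (x * z) + F * (y * z) := by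
  have hdeg : ∀ d ∈ g.support, d 0 + d 1 + d 2 = 2 := by
    intro d hd
    have h2 := hg (mem_support_iff.mp hd)
    rw [Finsupp.weight_apply] at h2
    rw [Finsupp.sum_fintype] at h2
    · simpa [Fin.sum_univ_three] using h2
    · intro i; simp
  have main : ∀ s : Finset (Fin 3 →₀ ℕ), (∀ d ∈ s, d 0 + d 1 + d 2 = 2) →
      ∃ A B Cc D E F : ℂ, ∀ x y z : ℂ,
        (∑ d ∈ s, coeff d g * (x ^ d 0 * y ^ d 1 * z ^ d 2)) =
          A * x ^ 2 + B * y ^ 2 + Cc * z ^ 2 + D * (x * y) + E * (x * z) + F * (y * z) := by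
    intro s
    induction s using Finset.cons_induction with
    | empty => exact fun _ => ⟨0,0,0,0,0,0, fun x y z => by simp⟩
    | cons d s hds ih =>
      intro h
      obtain ⟨A,B,Cc,D,E,F,hf⟩ := ih (fun e he => h e (Finset.mem_cons_of_mem he))
      have hd2 := h d (Finset.mem_cons_self d s)
      refine ⟨A + coeff d g * (if d 0 = 2 then 1 else 0),
        B + coeff d g * (if d 1 = 2 then 1 else 0),
        Cc + coeff d g * (if d 2 = 2 then 1 else 0),
        D + coeff d g * (if d 0 = 1 ∧ d 1 = 1 then 1 else 0),
        E + coeff d g * (if d 0 = 1 ∧ d 2 = 1 then 1 else 0),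
        F + coeff d g * (if d 1 = 1 ∧ d 2 = 1 then 1 else 0), fun x y z => ?_⟩
      rw [Finset.sum_cons, hf, monom_two (d 0) (d 1) (d 2) hd2]
      ring
  obtain ⟨A,B,Cc,D,E,F,hf⟩ := main g.support hdeg
  refine ⟨A,B,Cc,D,E,F, fun x y z => ?_⟩
  rw [← hf x y z, eval_eq']
  apply Finset.sum_congr rfl
  intro d _
  rw [Fin.prod_univ_three]
  simp

/-- Polarization: evaluation of a homogeneous quadratic on a 3-parameter family. -/
private lemma polar3 (q : MvPolynomial (Fin 4) ℂ) (hq : q.IsHomogeneous 2)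
    (u v w : Fin 4 → ℂ) :
    ∃ A B Cc D E F : ℂ, ∀ x y z : ℂ,
      eval (x • u + y • v + z • w) q =
        A * x ^ 2 + B * y ^ 2 + Cc * z ^ 2 + D * (x * y) + E * (x * z) + F * (y * z) := by
  set f : Fin 4 → MvPolynomial (Fin 3) ℂ :=
    fun i => C (u i) * X 0 + C (v i) * X 1 + C (w i) * X 2 with hfdef
  have hfh : ∀ i, (f i).IsHomogeneous 1 := by
    intro i
    exact ((isHomogeneous_C_mul_X _ _).add (isHomogeneous_C_mul_X _ _)).add
      (isHomogeneous_C_mul_X _ _)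
  have hg : (aeval f q).IsHomogeneous 2 := by
    have := hq.aeval f hfh
    simpa using this
  have key : ∀ x y z : ℂ, eval ![x, y, z] (aeval f q) = eval (x • u + y • v + z • w) q := by
    intro x y z
    rw [aeval_def, eval_eval₂]
    have h1 : (eval ![x,y,z]).comp (algebraMap ℂ (MvPolynomial (Fin 3) ℂ)) = RingHom.id ℂ := by
      ext r
      simp [MvPolynomial.algebraMap_eq]
    rw [h1, eval₂_id]
    have h2 : (fun s => eval ![x,y,z] (f s)) = x • u + y • v + z • w := by
      funext i
      simp [hfdef, Pi.add_apply, Pi.smul_apply, smul_eq_mul]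
      ring
    rw [h2]
  obtain ⟨A,B,Cc,D,E,F,hf⟩ := quad_eval_form _ hg
  exact ⟨A,B,Cc,D,E,F, fun x y z => by rw [← key, hf]⟩

private lemma eval_smul_sq (q : MvPolynomial (Fin 4) ℂ) (hq : q.IsHomogeneous 2)
    (c : ℂ) (v : Fin 4 → ℂ) : eval (c • v) q = c ^ 2 * eval v q := by
  obtain ⟨A,B,Cc,D,E,F,h⟩ := polar3 q hq v 0 0
  have h1 := h c 0 0
  have h2 := h 1 0 0
  norm_num [smul_zero, zero_smul, add_zero, one_smul] at h1 h2
  rw [h1, h2]; ring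

example : True := trivial
/-- If a quadric vanishes at three points of a line in general position,
it vanishes on the whole line. -/
private lemma line_vanish (q : MvPolynomial (Fin 4) ℂ) (hq : q.IsHomogeneous 2)
    (u v : Fin 4 → ℂ) (hu : eval u q = 0) (hv : eval v q = 0) (a b : ℂ)
    (ha : a ≠ 0) (hb : b ≠ 0) (hw : eval (a • u + b • v) q = 0) :
    ∀ x y : ℂ, eval (x • u + y • v) q = 0 := by
  obtain ⟨A,B,Cc,D,E,F,h⟩ := polar3 q hq u v 0
  have hA : A = 0 := by
    have e := h 1 0 0
    norm_num [one_smul, zero_smul, smul_zero, add_zero] at e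
    rw [hu] at e; exact e.symm
  have hB : B = 0 := by
    have e := h 0 1 0
    norm_num [one_smul, zero_smul, smul_zero, add_zero] at e
    rw [hv] at e; exact e.symm
  have hD : D = 0 := by
    have e := h a b 0
    norm_num [smul_zero, add_zero] at e
    rw [hw, hA, hB] at e
    norm_num at e
    rcases e with h' | h' | h'
    · exact h'
    · exact absurd h' ha
    · exact absurd h' hb
  intro x y
  have e := h x y 0
  norm_num [smul_zero, add_zero] at e
  rw [e, hA, hB, hD]; ring
/-- If the common zero locus in ℙ³ of three homogeneous quadrics in four variables
consists of exactly 8 distinct points, these 8 points do not all lie on a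
hyperplane. -/
theorem eight_points_not_on_hyperplane
    (q₀ q₁ q₂ : MvPolynomial (Fin 4) ℂ)
    (h₀ : q₀.IsHomogeneous 2) (h₁ : q₁.IsHomogeneous 2) (h₂ : q₂.IsHomogeneous 2)
    (S : Set (Projectivization ℂ (Fin 4 → ℂ)))
    (hS : S = {x | eval x.rep q₀ = 0 ∧ eval x.rep q₁ = 0 ∧ eval x.rep q₂ = 0})
    (hfin : S.Finite) (hcard : S.ncard = 8) :
    ¬ ∃ ℓ : (Fin 4 → ℂ) →ₗ[ℂ] ℂ, ℓ ≠ 0 ∧ ∀ x ∈ S, ℓ x.rep = 0 := by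
  rintro ⟨ℓ, hℓ, hmemS⟩
  classical
  haveI := hfin.fintype
  have hcard' : Fintype.card S = 8 := by
    rw [← Nat.card_eq_fintype_card, Nat.card_coe_set_eq]; exact hcard
  let e := Fintype.equivFinOfCardEq hcard'
  let p : Fin 8 → Projectivization ℂ (Fin 4 → ℂ) := fun i => (e.symm i : S)
  have hpS : ∀ i, p i ∈ S := fun i => (e.symm i).2
  have hpinj : Function.Injective p := by
    intro i j h
    exact e.symm.injective (Subtype.coe_inj.mp h)
  set r : Fin 8 → (Fin 4 → ℂ) := fun i => (p i).rep with hrdef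
  have hr0 : ∀ i, r i ≠ 0 := fun i => Projectivization.rep_nonzero _
  have hrW : ∀ i, ℓ (r i) = 0 := fun i => hmemS _ (hpS i)
  have hv : ∀ i, eval (r i) q₀ = 0 ∧ eval (r i) q₁ = 0 ∧ eval (r i) q₂ = 0 := by
    intro i; have h := hpS i; rw [hS] at h; exact h
  have nonprop : ∀ i j : Fin 8, i ≠ j → ∀ c : ℂ, r i ≠ c • r j := by
    intro i j hij c hc
    apply hij
    apply hpinj
    have h1 : Projectivization.mk ℂ (r i) (hr0 i) = Projectivization.mk ℂ (r j) (hr0 j) :=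
      (Projectivization.mk_eq_mk_iff' ℂ _ _ _ _).mpr ⟨c, hc.symm⟩
    rwa [Projectivization.mk_rep, Projectivization.mk_rep] at h1
  have pairind : ∀ i j : Fin 8, i ≠ j → LinearIndependent ℂ ![r i, r j] := by
    intro i j hij
    rw [linearIndependent_fin2]
    exact ⟨by simpa using hr0 j, fun a h => nonprop i j hij a (by simpa using h.symm)⟩
  have hSnotinf : ¬ S.Infinite := Set.not_infinite.mpr hfin
  -- a projective line inside the zero locus contradicts finiteness
  have line_inf : ∀ u v : Fin 4 → ℂ, LinearIndependent ℂ ![u, v] →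
      (∀ x y : ℂ, eval (x • u + y • v) q₀ = 0 ∧ eval (x • u + y • v) q₁ = 0 ∧
        eval (x • u + y • v) q₂ = 0) → False := by
    intro u v hind hvan
    have hne : ∀ t : ℂ, u + t • v ≠ 0 := by
      intro t h
      have h0 := Fintype.linearIndependent_iff.mp hind ![1, t] ?_ 0
      · simpa using h0
      · rw [Fin.sum_univ_two]; simpa using h
    apply hSnotinf
    apply Set.infinite_of_injective_forall_mem
      (f := fun t : ℂ => Projectivization.mk ℂ (u + t • v) (hne t))
    · intro t s hts
      rw [Projectivization.mk_eq_mk_iff] at hts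
      obtain ⟨c, hc⟩ := hts
      simp only [Units.smul_def] at hc
      have hz : ((c:ℂ) - 1) • u + ((c:ℂ) * s - t) • v = 0 := by
        linear_combination (norm := module) hc
      have h0 := Fintype.linearIndependent_iff.mp hind ![(c:ℂ) - 1, (c:ℂ) * s - t] ?_
      · have hc1 : (c:ℂ) = 1 := by
          have h2 := h0 0; simp only [Matrix.cons_val_zero] at h2
          have := sub_eq_zero.mp h2; exact this
        have h2 := h0 1
        simp only [Matrix.cons_val_one, Matrix.head_cons] at h2
        rw [hc1, one_mul] at h2
        exact (sub_eq_zero.mp h2).symm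
      · rw [Fin.sum_univ_two]; simpa using hz
    · intro t
      rw [hS]
      obtain ⟨c, hc⟩ := Projectivization.exists_smul_eq_mk_rep ℂ (u + t • v) (hne t)
      simp only [Units.smul_def] at hc
      have h1 := hvan 1 t
      rw [one_smul] at h1
      refine ⟨?_, ?_, ?_⟩
      · rw [← hc, eval_smul_sq q₀ h₀, h1.1, mul_zero]
      · rw [← hc, eval_smul_sq q₁ h₁, h1.2.1, mul_zero]
      · rw [← hc, eval_smul_sq q₂ h₂, h1.2.2, mul_zero]
  -- no three of the points are collinear
  have collin : ∀ i j k : Fin 8, i ≠ j → j ≠ k → i ≠ k →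
      r k ∉ Submodule.span ℂ {r i, r j} := by
    intro i j k hij hjk hik hmem'
    rw [Submodule.mem_span_pair] at hmem'
    obtain ⟨a, b, hab⟩ := hmem'
    have ha : a ≠ 0 := by
      rintro rfl
      rw [zero_smul, zero_add] at hab
      exact nonprop k j (fun h => hjk h.symm) b hab.symm
    have hb : b ≠ 0 := by
      rintro rfl
      rw [zero_smul, add_zero] at hab
      exact nonprop k i (fun h => hik h.symm) a hab.symm
    have hg0 : eval (a • r i + b • r j) q₀ = 0 := by rw [hab]; exact (hv k).1
    have hg1 : eval (a • r i + b • r j) q₁ = 0 := by rw [hab]; exact (hv k).2.1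
    have hg2 : eval (a • r i + b • r j) q₂ = 0 := by rw [hab]; exact (hv k).2.2
    apply line_inf (r i) (r j) (pairind i j hij)
    intro x y
    exact ⟨line_vanish q₀ h₀ _ _ (hv i).1 (hv j).1 a b ha hb hg0 x y,
      line_vanish q₁ h₁ _ _ (hv i).2.1 (hv j).2.1 a b ha hb hg1 x y,
      line_vanish q₂ h₂ _ _ (hv i).2.2 (hv j).2.2 a b ha hb hg2 x y⟩
  -- the kernel of ℓ is 3-dimensional and spanned by r 0, r 1, r 2
  have hrWmem : ∀ i, r i ∈ LinearMap.ker ℓ := fun i => LinearMap.mem_ker.mpr (hrW i)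
  have hW3 : Module.finrank ℂ (LinearMap.ker ℓ) = 3 := by
    have h4 : Module.finrank ℂ (Fin 4 → ℂ) = 4 := Module.finrank_fin_fun ℂ
    have hrange : LinearMap.range ℓ = ⊤ := by
      rcases Ideal.eq_bot_or_top (LinearMap.range ℓ) with h | h
      · exact absurd (LinearMap.range_eq_bot.mp h) hℓ
      · exact h
    have hrn := LinearMap.finrank_range_add_finrank_ker ℓ
    rw [hrange, finrank_top, Module.finrank_self, h4] at hrn
    omega
  have li3 : LinearIndependent ℂ ![r 0, r 1, r 2] := by
    rw [show ![r 0, r 1, r 2] = Fin.cons (r 0) ![r 1, r 2] from rfl, linearIndependent_fin_cons]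
    refine ⟨pairind 1 2 (by decide), ?_⟩
    have hrg : Set.range ![r 1, r 2] = {r 1, r 2} := by
      ext x; simp [Matrix.range_cons, Matrix.range_cons_empty]; tauto
    rw [hrg]
    exact collin 1 2 0 (by decide) (by decide) (by decide)
  have hspan : Submodule.span ℂ ({r 0, r 1, r 2} : Set (Fin 4 → ℂ)) = LinearMap.ker ℓ := by
    have hset : ({r 0, r 1, r 2} : Set (Fin 4 → ℂ)) = Set.range ![r 0, r 1, r 2] := by
      ext x; simp [Matrix.range_cons, Matrix.range_cons_empty]; tauto
    apply Submodule.eq_of_le_of_finrank_le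
    · rw [Submodule.span_le]
      intro x hx
      simp only [Set.mem_insert_iff, Set.mem_singleton_iff] at hx
      rcases hx with rfl | rfl | rfl
      · exact hrWmem 0
      · exact hrWmem 1
      · exact hrWmem 2
    · rw [hset, finrank_span_eq_card li3, hW3]
      simp
  have hcoord : ∀ k : Fin 8, ∃ a b c : ℂ, r k = a • r 0 + b • r 1 + c • r 2 := by
    intro k
    have hk : r k ∈ Submodule.span ℂ ({r 0, r 1, r 2} : Set (Fin 4 → ℂ)) :=
      hspan ▸ hrWmem k
    rw [show ({r 0, r 1, r 2} : Set (Fin 4 → ℂ)) = insert (r 0) {r 1, r 2} from rfl,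
      Submodule.mem_span_insert] at hk
    obtain ⟨a, z, hz, hrk⟩ := hk
    rw [Submodule.mem_span_pair] at hz
    obtain ⟨b, c, hbc⟩ := hz
    exact ⟨a, b, c, by rw [hrk, ← hbc]; module⟩
  obtain ⟨a₄, b₄, c₄, h4⟩ := hcoord 3
  obtain ⟨a₅, b₅, c₅, h5⟩ := hcoord 4
  have hc₄ : c₄ ≠ 0 := by
    rintro rfl
    apply collin 0 1 3 (by decide) (by decide) (by decide)
    rw [Submodule.mem_span_pair]
    exact ⟨a₄, b₄, by rw [h4]; module⟩
  have hc₅ : c₅ ≠ 0 := by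
    rintro rfl
    apply collin 0 1 4 (by decide) (by decide) (by decide)
    rw [Submodule.mem_span_pair]
    exact ⟨a₅, b₅, by rw [h5]; module⟩
  have hab₄ : ¬(a₄ = 0 ∧ b₄ = 0) := by
    rintro ⟨rfl, rfl⟩
    exact nonprop 3 2 (by decide) c₄ (by rw [h4]; module)
  have hab₅ : ¬(a₅ = 0 ∧ b₅ = 0) := by
    rintro ⟨rfl, rfl⟩
    exact nonprop 4 2 (by decide) c₅ (by rw [h5]; module)
  have cross : a₄ * b₅ - b₄ * a₅ ≠ 0 := by
    intro hcr
    apply collin 2 3 4 (by decide) (by decide) (by decide)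
    rw [Submodule.mem_span_pair]
    by_cases ha4 : a₄ = 0
    · have hb4 : b₄ ≠ 0 := fun hb => hab₄ ⟨ha4, hb⟩
      refine ⟨c₅ - (b₅/b₄) * c₄, b₅/b₄, ?_⟩
      rw [h4, h5]
      match_scalars <;> field_simp
      ring
      linear_combination hcr
    · refine ⟨c₅ - (a₅/a₄) * c₄, a₅/a₄, ?_⟩
      rw [h4, h5]
      match_scalars <;> field_simp
      ring
      linear_combination -hcr
  -- the cross product κ of the two "normalized coordinate" vectors
  obtain ⟨κ₁, hκ₁def⟩ : ∃ k, k = c₄*c₅*(a₄*b₅ - b₄*a₅) := ⟨_, rfl⟩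
  obtain ⟨κ₂, hκ₂def⟩ : ∃ k, k = b₄*c₄*(a₅*b₅) - a₄*b₄*(b₅*c₅) := ⟨_, rfl⟩
  obtain ⟨κ₃, hκ₃def⟩ : ∃ k, k = a₄*b₄*(a₅*c₅) - a₄*c₄*(a₅*b₅) := ⟨_, rfl⟩
  have hκ₁ : κ₁ ≠ 0 := by
    rw [hκ₁def]; exact mul_ne_zero (mul_ne_zero hc₄ hc₅) cross
  -- every one of the quadrics vanishes on the conic determined by κ
  have quadzero : ∀ q : MvPolynomial (Fin 4) ℂ, q.IsHomogeneous 2 → eval (r 0) q = 0 →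
      eval (r 1) q = 0 → eval (r 2) q = 0 → eval (r 3) q = 0 → eval (r 4) q = 0 →
      ∀ x y z : ℂ, κ₁*(x*y) + κ₂*(x*z) + κ₃*(y*z) = 0 →
      eval (x • r 0 + y • r 1 + z • r 2) q = 0 := by
    intro q hq hv0 hv1 hv2 hv3 hv4
    obtain ⟨A,B,Cc,D,E,F,h⟩ := polar3 q hq (r 0) (r 1) (r 2)
    have hA : A = 0 := by
      have e := h 1 0 0
      norm_num [one_smul, zero_smul, smul_zero, add_zero] at e
      rw [hv0] at e; exact e.symm
    have hB : B = 0 := by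
      have e := h 0 1 0
      norm_num [one_smul, zero_smul, smul_zero, add_zero, zero_add] at e
      rw [hv1] at e; exact e.symm
    have hC : Cc = 0 := by
      have e := h 0 0 1
      norm_num [one_smul, zero_smul, smul_zero, add_zero, zero_add] at e
      rw [hv2] at e; exact e.symm
    have e4 : D*(a₄*b₄) + E*(a₄*c₄) + F*(b₄*c₄) = 0 := by
      have e := h a₄ b₄ c₄
      rw [← h4, hv3, hA, hB, hC] at e
      linear_combination -e
    have e5 : D*(a₅*b₅) + E*(a₅*c₅) + F*(b₅*c₅) = 0 := by
      have e := h a₅ b₅ c₅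
      rw [← h5, hv4, hA, hB, hC] at e
      linear_combination -e
    have hED : D*κ₂ = E*κ₁ := by
      rw [hκ₁def, hκ₂def]
      linear_combination (b₄*c₄)*e5 - (b₅*c₅)*e4
    have hFD : D*κ₃ = F*κ₁ := by
      rw [hκ₁def, hκ₃def]
      linear_combination (a₅*c₅)*e4 - (a₄*c₄)*e5
    intro x y z hk
    rw [h x y z, hA, hB, hC]
    have key : κ₁ * (D*(x*y) + E*(x*z) + F*(y*z)) = 0 := by
      have hexp : κ₁ * (D*(x*y) + E*(x*z) + F*(y*z)) =
          D * (κ₁*(x*y) + κ₂*(x*z) + κ₃*(y*z)) := by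
        linear_combination (-(x*z))*hED - (y*z)*hFD
      rw [hexp, hk, mul_zero]
    have hsub : D*(x*y) + E*(x*z) + F*(y*z) = 0 := by
      rcases mul_eq_zero.mp key with h' | h'
      · exact absurd h' hκ₁
      · exact h'
    linear_combination hsub
  -- the conic contains an infinite family of projective points, all inside S
  apply hSnotinf
  have hvne : ∀ t : ℂ, t • r 0 + (-κ₂*t/(κ₁*t+κ₃)) • r 1 + (1:ℂ) • r 2 ≠ 0 := by
    intro t h
    have h0 := Fintype.linearIndependent_iff.mp li3 ![t, -κ₂*t/(κ₁*t+κ₃), 1] ?_ 2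
    · simpa using h0
    · rw [Fin.sum_univ_three]; simpa using h
  have hT : Set.Infinite {t : ℂ | κ₁ * t + κ₃ ≠ 0} := by
    have hfin' : Set.Finite {t : ℂ | κ₁ * t + κ₃ = 0} := by
      apply Set.Finite.subset (Set.finite_singleton (-κ₃/κ₁))
      intro t ht
      simp only [Set.mem_setOf_eq] at ht
      simp only [Set.mem_singleton_iff]
      field_simp
      linear_combination ht
    have hcompl := hfin'.infinite_compl
    have hseteq : {t : ℂ | κ₁ * t + κ₃ = 0}ᶜ = {t : ℂ | κ₁ * t + κ₃ ≠ 0} := by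
      ext t; simp
    rwa [hseteq] at hcompl
  apply Set.infinite_of_injOn_mapsTo
    (f := fun t : ℂ => Projectivization.mk ℂ _ (hvne t)) ?_ ?_ hT
  · -- injectivity on the parameter set
    intro t ht s hs hts
    simp only at hts
    rw [Projectivization.mk_eq_mk_iff] at hts
    obtain ⟨c, hc⟩ := hts
    simp only [Units.smul_def] at hc
    have hz : ((c:ℂ)*s - t) • r 0 +
        ((c:ℂ)*(-κ₂*s/(κ₁*s+κ₃)) - (-κ₂*t/(κ₁*t+κ₃))) • r 1 + ((c:ℂ) - 1) • r 2 = 0 := by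
      linear_combination (norm := module) hc
    have h0 := Fintype.linearIndependent_iff.mp li3
      ![(c:ℂ)*s - t, (c:ℂ)*(-κ₂*s/(κ₁*s+κ₃)) - (-κ₂*t/(κ₁*t+κ₃)), (c:ℂ) - 1] ?_
    · have hc1 : (c:ℂ) = 1 := by
        have h2 := h0 2
        simp only [Matrix.cons_val_two, Matrix.tail_cons, Matrix.head_cons] at h2
        exact sub_eq_zero.mp h2
      have h2 := h0 0
      simp only [Matrix.cons_val_zero] at h2
      rw [hc1, one_mul] at h2
      exact (sub_eq_zero.mp h2).symm
    · rw [Fin.sum_univ_three]; simpa using hz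
  · -- the family lies in S
    intro t ht
    simp only [Set.mem_setOf_eq] at ht
    show _ ∈ S
    rw [hS]
    obtain ⟨c, hc⟩ := Projectivization.exists_smul_eq_mk_rep ℂ _ (hvne t)
    simp only [Units.smul_def] at hc
    have hKt : κ₁*(t*(-κ₂*t/(κ₁*t+κ₃))) + κ₂*(t*1) + κ₃*((-κ₂*t/(κ₁*t+κ₃))*1) = 0 := by
      field_simp
      ring
    refine ⟨?_, ?_, ?_⟩
    · rw [← hc, eval_smul_sq q₀ h₀,
        quadzero q₀ h₀ (hv 0).1 (hv 1).1 (hv 2).1 (hv 3).1 (hv 4).1 _ _ _ hKt, mul_zero]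
    · rw [← hc, eval_smul_sq q₁ h₁,
        quadzero q₁ h₁ (hv 0).2.1 (hv 1).2.1 (hv 2).2.1 (hv 3).2.1 (hv 4).2.1 _ _ _ hKt, mul_zero]
    · rw [← hc, eval_smul_sq q₂ h₂,
        quadzero q₂ h₂ (hv 0).2.2 (hv 1).2.2 (hv 2).2.2 (hv 3).2.2 (hv 4).2.2 _ _ _ hKt, mul_zero]
end
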